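/- Let (X, τ) be a hereditarily normal T1 space without isolated points, let k ≥ 1 be an integer, and let M_1, …, M_k be subsets of X such that each subspace M_i of (X, τ) satisfies dim M_i ≤ 0 and τ = ⋂_{i=1}^{k} τ(M_i). Then dim (X, τ) ≤ k − 1. -/
import Mathlib


/-- The Bing–Hanner extension `τ(M)` of a topology `τ` on `X` determined by a subset `M ⊆ X`:
its open sets are exactly the sets of the form `U ∪ K` with `U` a `τ`-open set and
`K ⊆ X \ M`. -/
def bingHanner {X : Type*} (τ : TopologicalSpace X) (M : Set X) : TopologicalSpace X where
  IsOpen O := ∃ U K : Set X, τ.IsOpen U ∧ K ⊆ Mᶜ ∧ O = U ∪ K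
  isOpen_univ := ⟨Set.univ, ∅, τ.isOpen_univ, by simp, by simp⟩
  isOpen_inter := by
    rintro s t ⟨U₁, K₁, hU₁, hK₁, rfl⟩ ⟨U₂, K₂, hU₂, hK₂, rfl⟩
    refine ⟨U₁ ∩ U₂, ((U₁ ∪ K₁) ∩ (U₂ ∪ K₂)) \ (U₁ ∩ U₂),
      τ.isOpen_inter _ _ hU₁ hU₂, ?_, ?_⟩
    · rintro x ⟨⟨h1, h2⟩, hn⟩
      rcases h1 with h1 | h1
      · rcases h2 with h2 | h2
        · exact absurd ⟨h1, h2⟩ hn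
        · exact hK₂ h2
      · exact hK₁ h1
    · have hsub : U₁ ∩ U₂ ⊆ (U₁ ∪ K₁) ∩ (U₂ ∪ K₂) :=
        fun x hx => ⟨Or.inl hx.1, Or.inl hx.2⟩
      exact (Set.union_diff_cancel hsub).symm
  isOpen_sUnion := by
    intro S hS
    choose U K hU hK hEq using hS
    refine ⟨⋃ s, ⋃ h : s ∈ S, U s h, ⋃ s, ⋃ h : s ∈ S, K s h, ?_, ?_, ?_⟩
    · letI := τ
      exact isOpen_iUnion fun s => isOpen_iUnion fun h => hU s h
    · exact Set.iUnion_subset fun s => Set.iUnion_subset fun h => hK s h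
    · ext x
      simp only [Set.mem_sUnion, Set.mem_union, Set.mem_iUnion]
      constructor
      · rintro ⟨s, hs, hx⟩
        rw [hEq s hs] at hx
        rcases hx with hx | hx
        · exact Or.inl ⟨s, hs, hx⟩
        · exact Or.inr ⟨s, hs, hx⟩
      · rintro (⟨s, hs, hx⟩ | ⟨s, hs, hx⟩)
        · exact ⟨s, hs, by rw [hEq s hs]; exact Or.inl hx⟩
        · exact ⟨s, hs, by rw [hEq s hs]; exact Or.inr hx⟩

/-- `covDimLE t n` : the covering dimension of `(X, t)` is at most `n`, i.e. every finite
open cover admits a finite open refinement covering `X` in which any `n + 2` pairwise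
distinct members have empty intersection. -/
def covDimLE {X : Type*} (t : TopologicalSpace X) (n : ℕ) : Prop :=
  ∀ C : Set (Set X), C.Finite → (∀ U ∈ C, t.IsOpen U) → ⋃₀ C = Set.univ →
    ∃ V : Set (Set X), V.Finite ∧ (∀ U ∈ V, t.IsOpen U) ∧ ⋃₀ V = Set.univ ∧
      (∀ U ∈ V, ∃ W ∈ C, U ⊆ W) ∧
      ∀ F : Finset (Set X), ↑F ⊆ V → F.card = n + 2 → ⋂₀ (F : Set (Set X)) = ∅

/-- `IndLE0 t` : the large inductive dimension of `(Z, t)` is at most `0`, i.e. any two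
disjoint closed sets are separated by a clopen set. -/
def IndLE0 {Z : Type*} (t : TopologicalSpace Z) : Prop :=
  ∀ A B : Set Z, @IsClosed Z t A → @IsClosed Z t B → Disjoint A B →
    ∃ U : Set Z, t.IsOpen U ∧ @IsClosed Z t U ∧ A ⊆ U ∧ U ∩ B = ∅

/-- `indLE0 t` : the small inductive dimension of `(Z, t)` is at most `0`, i.e. every point
has a neighborhood basis of clopen sets. -/
def indLE0 {Z : Type*} (t : TopologicalSpace Z) : Prop :=
  ∀ (x : Z) (O : Set Z), t.IsOpen O → x ∈ O →
    ∃ U : Set Z, t.IsOpen U ∧ @IsClosed Z t U ∧ x ∈ U ∧ U ⊆ O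

/-- `L` is a partition between `A` and `B` in `(X, t)`. -/
def isPartitionBetween {X : Type*} (t : TopologicalSpace X) (A B L : Set X) : Prop :=
  ∃ U V : Set X, t.IsOpen U ∧ t.IsOpen V ∧ Disjoint U V ∧ A ⊆ U ∧ B ⊆ V ∧ L = (U ∪ V)ᶜ

lemma bh_sep_lemma {X : Type*} [TopologicalSpace X] [T5Space X] {ι : Type*}
    (S : Finset ι) (E : ι → Set X)
    (hsep : ∀ s ∈ S, ∀ t ∈ S, s ≠ t → Disjoint (closure (E s)) (E t)) :
    ∃ G : ι → Set X, (∀ s ∈ S, IsOpen (G s)) ∧ (∀ s ∈ S, E s ⊆ G s) ∧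
      ∀ s ∈ S, ∀ t ∈ S, s ≠ t → Disjoint (G s) (G t) := by
  classical
  have key : ∀ s : ι, ∃ UV : Set X × Set X, s ∈ S →
      IsOpen UV.1 ∧ IsOpen UV.2 ∧ E s ⊆ UV.1 ∧ (⋃ t ∈ S.erase s, E t) ⊆ UV.2 ∧
      Disjoint UV.1 UV.2 := by
    intro s
    by_cases hs : s ∈ S
    · have h1 : Disjoint (closure (E s)) (⋃ t ∈ S.erase s, E t) :=
        Set.disjoint_iUnion₂_right.mpr fun t ht =>
          hsep s hs t (Finset.mem_of_mem_erase ht) (Finset.ne_of_mem_erase ht).symm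
      have h2 : Disjoint (E s) (closure (⋃ t ∈ S.erase s, E t)) := by
        rw [Finset.closure_biUnion]
        exact Set.disjoint_iUnion₂_right.mpr fun t ht =>
          (hsep t (Finset.mem_of_mem_erase ht) s hs (Finset.ne_of_mem_erase ht)).symm
      obtain ⟨U, V, hU, hV, hEU, hRV, hUV⟩ :=
        separatedNhds_iff_disjoint.mpr (CompletelyNormalSpace.completely_normal h1 h2)
      exact ⟨(U, V), fun _ => ⟨hU, hV, hEU, hRV, hUV⟩⟩
    · exact ⟨(∅, ∅), fun h => absurd h hs⟩
  choose UV hUV using key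
  refine ⟨fun s => (UV s).1 ∩ ⋂ t ∈ S.erase s, (UV t).2, ?_, ?_, ?_⟩
  · intro s hs
    exact ((hUV s hs).1).inter (isOpen_biInter_finset fun t ht =>
      (hUV t (Finset.mem_of_mem_erase ht)).2.1)
  · intro s hs x hx
    refine ⟨(hUV s hs).2.2.1 hx, ?_⟩
    simp only [Set.mem_iInter]
    intro t ht
    have hsS : s ∈ S.erase t :=
      Finset.mem_erase.mpr ⟨(Finset.ne_of_mem_erase ht).symm, hs⟩
    exact (hUV t (Finset.mem_of_mem_erase ht)).2.2.2.1 (Set.mem_biUnion hsS hx)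
  · intro s hs t ht hst
    refine ((hUV s hs).2.2.2.2).mono Set.inter_subset_left ?_
    refine Set.inter_subset_right.trans ?_
    exact Set.biInter_subset_of_mem (Finset.mem_erase.mpr ⟨hst, hs⟩)

/-- If `(X, τ)` is hereditarily normal `T₁` without isolated points,
`k ≥ 1`, each subspace `M_i` has `dim M_i ≤ 0`, and `τ = ⋂_{i=1}^{k} τ(M_i)`, then
`dim (X, τ) ≤ k - 1`. -/
theorem dim_le_of_bingHanner_intersection {X : Type*} (τ : TopologicalSpace X)
    (hT5 : @T5Space X τ) (hnoiso : ∀ x : X, ¬ τ.IsOpen {x})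
    (k : ℕ) (hk : 1 ≤ k) (M : Fin k → Set X)
    (hdim : ∀ i, covDimLE (TopologicalSpace.induced (Subtype.val : (M i) → X) τ) 0)
    (hint : ∀ O : Set X, τ.IsOpen O ↔ ∀ i, (bingHanner τ (M i)).IsOpen O) :
    covDimLE τ (k - 1) := by
  classical
  letI : TopologicalSpace X := τ
  haveI : T5Space X := hT5
  -- Every point lies in some `M i`.
  have hcov : ∀ x : X, ∃ i, x ∈ M i := by
    intro x
    by_contra hx
    push_neg at hx
    apply hnoiso x
    refine (hint {x}).mpr fun i => ⟨∅, {x}, isOpen_empty, ?_, by simp⟩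
    intro y hy
    simp only [Set.mem_singleton_iff] at hy
    subst hy
    exact hx i
  intro C hCfin hCopen hCcov
  -- For each i, a disjoint open (in X) partial refinement covering `M i`.
  have key : ∀ i : Fin k, ∃ W : Set (Set X), W.Finite ∧ (∀ A ∈ W, IsOpen A) ∧
      M i ⊆ ⋃₀ W ∧ (∀ A ∈ W, ∃ O ∈ C, A ⊆ O) ∧
      (∀ A ∈ W, ∀ B ∈ W, A ≠ B → Disjoint A B) := by
    intro i
    set p : Set X → Set ↥(M i) := fun O => (Subtype.val : ↥(M i) → X) ⁻¹' O with hp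
    obtain ⟨V, hVfin, hVop, hVcov, hVref, hVord⟩ :=
      hdim i (p '' C) (hCfin.image p)
        (by rintro U ⟨O, hO, rfl⟩; exact ⟨O, hCopen O hO, rfl⟩)
        (by
          ext x
          simp only [Set.mem_univ, iff_true]
          have : (x : X) ∈ ⋃₀ C := hCcov ▸ Set.mem_univ _
          obtain ⟨O, hO, hxO⟩ := this
          exact ⟨p O, ⟨O, hO, rfl⟩, hxO⟩)
    -- distinct members of V are disjoint
    have hdisjV : ∀ s ∈ V, ∀ t ∈ V, s ≠ t → s ∩ t = ∅ := by
      intro s hs t ht hst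
      have h2 : ({s, t} : Finset (Set ↥(M i))).card = 0 + 2 := by
        rw [Finset.card_pair hst]
      have := hVord {s, t} (by
        intro A hA
        simp only [Finset.coe_insert, Finset.coe_singleton, Set.mem_insert_iff,
          Set.mem_singleton_iff] at hA
        rcases hA with rfl | rfl
        · exact hs
        · exact ht) h2
      simpa using this
    -- the images in X are pairwise separated
    set E : Set ↥(M i) → Set X := fun s => Subtype.val '' s with hE
    have hsepE : ∀ s ∈ hVfin.toFinset, ∀ t ∈ hVfin.toFinset, s ≠ t →
        Disjoint (closure (E s)) (E t) := by
      intro s hs t ht hst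
      rw [Set.Finite.mem_toFinset] at hs ht
      rw [Set.disjoint_left]
      rintro x hxcl ⟨w, hwt, rfl⟩
      obtain ⟨H, hH, hHt⟩ := hVop t ht
      have hwH : (w : X) ∈ H := by
        rw [← hHt] at hwt
        exact hwt
      obtain ⟨z, hzH, u, hus, rfl⟩ := mem_closure_iff.mp hxcl H hH hwH
      have hut : u ∈ t := by
        rw [← hHt]
        exact hzH
      have h0 : u ∈ s ∩ t := ⟨hus, hut⟩
      rw [hdisjV s hs t ht hst] at h0
      exact h0
    obtain ⟨G, hGopen, hGsub, hGdisj⟩ := bh_sep_lemma hVfin.toFinset E hsepE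
    -- choose an element of C containing each piece
    have hchoice : ∀ s : Set ↥(M i), ∃ O : Set X, s ∈ V → O ∈ C ∧ E s ⊆ O := by
      intro s
      by_cases hs : s ∈ V
      · obtain ⟨W', hW', hsW⟩ := hVref s hs
        obtain ⟨O, hO, rfl⟩ := hW'
        refine ⟨O, fun _ => ⟨hO, ?_⟩⟩
        rintro x ⟨u, hu, rfl⟩
        exact hsW hu
      · exact ⟨∅, fun h => absurd h hs⟩
    choose c hc using hchoice
    refine ⟨(fun s => G s ∩ c s) '' V, hVfin.image _, ?_, ?_, ?_, ?_⟩
    · rintro A ⟨s, hs, rfl⟩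
      exact (hGopen s (hVfin.mem_toFinset.mpr hs)).inter (hCopen _ (hc s hs).1)
    · intro x hx
      have hxuniv : (⟨x, hx⟩ : ↥(M i)) ∈ ⋃₀ V := hVcov ▸ Set.mem_univ _
      obtain ⟨s, hsV, hxs⟩ := hxuniv
      have hxE : x ∈ E s := ⟨⟨x, hx⟩, hxs, rfl⟩
      exact ⟨G s ∩ c s, ⟨s, hsV, rfl⟩,
        hGsub s (hVfin.mem_toFinset.mpr hsV) hxE, (hc s hsV).2 hxE⟩
    · rintro A ⟨s, hs, rfl⟩
      exact ⟨c s, (hc s hs).1, Set.inter_subset_right⟩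
    · rintro A ⟨s, hs, rfl⟩ B ⟨t, ht, rfl⟩ hne
      have hst : s ≠ t := fun h => hne (by rw [h])
      exact (hGdisj s (hVfin.mem_toFinset.mpr hs) t (hVfin.mem_toFinset.mpr ht)
        hst).mono Set.inter_subset_left Set.inter_subset_left
  choose 𝒲 hWfin hWopen hWcov hWref hWdisj using key
  refine ⟨⋃ i, 𝒲 i, Set.finite_iUnion hWfin, ?_, ?_, ?_, ?_⟩
  · intro A hA
    obtain ⟨i, hAi⟩ := Set.mem_iUnion.mp hA
    exact hWopen i A hAi
  · ext x
    simp only [Set.mem_univ, iff_true]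
    obtain ⟨i, hxi⟩ := hcov x
    obtain ⟨A, hA, hxA⟩ := hWcov i hxi
    exact ⟨A, Set.mem_iUnion.mpr ⟨i, hA⟩, hxA⟩
  · intro A hA
    obtain ⟨i, hAi⟩ := Set.mem_iUnion.mp hA
    exact hWref i A hAi
  · intro F hFsub hFcard
    by_contra hne
    obtain ⟨x, hx⟩ := Set.nonempty_iff_ne_empty.mpr hne
    have hmaps : ∀ A : Set X, ∃ i : Fin k, A ∈ F → A ∈ 𝒲 i := by
      intro A
      by_cases hA : A ∈ F
      · obtain ⟨i, hi⟩ := Set.mem_iUnion.mp (hFsub hA)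
        exact ⟨i, fun _ => hi⟩
      · exact ⟨⟨0, hk⟩, fun h => absurd h hA⟩
    choose g hg using hmaps
    obtain ⟨A, hA, B, hB, hAB, hgAB⟩ :=
      Finset.exists_ne_map_eq_of_card_lt_of_maps_to (t := (Finset.univ : Finset (Fin k)))
        (by rw [hFcard, Finset.card_univ, Fintype.card_fin]; omega)
        (fun A _ => Finset.mem_univ (g A))
    have hAi : A ∈ 𝒲 (g A) := hg A hA
    have hBi : B ∈ 𝒲 (g A) := hgAB ▸ hg B hB
    exact Set.disjoint_left.mp (hWdisj (g A) A hAi B hBi hAB)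
      (hx A hA) (hx B hB)
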